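/- For an AMP essential graph 𝒢*: if α→β−γ occurs as a (not necessarily induced) subgraph of the reduced graph of 𝒢* over strong-equivalence classes, then α and γ are adjacent in the reduced graph and the edge between them satisfies α⇒γ (i.e., it is α→γ or α−γ). -/

import Mathlib

/-- A mixed graph: directed edges (arrows) and undirected edges (lines),
no loops, at most one edge between any two vertices. -/
structure MixedGraph (V : Type) where
  arrow : V → V → Prop
  line : V → V → Prop
  line_symm : ∀ a b, line a b → line b a
  arrow_irrefl : ∀ a, ¬ arrow a a
  line_irrefl : ∀ a, ¬ line a a
  not_arrow_line : ∀ a b, arrow a b → ¬ line a b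
  not_arrow_arrow : ∀ a b, arrow a b → ¬ arrow b a

namespace MixedGraph

variable {V : Type}

/-- `a` and `b` are adjacent (joined by some edge). -/
def adj (G : MixedGraph V) (a b : V) : Prop := G.arrow a b ∨ G.arrow b a ∨ G.line a b

/-- A step of a semi-directed path: a forward arrow or a line. -/
def step (G : MixedGraph V) (a b : V) : Prop := G.arrow a b ∨ G.line a b

/-- A semi-directed cycle of length `k ≥ 3`: `v 0, …, v k` with `v k = v 0`,
each step an arrow or a line, at least one arrow, vertices distinct. -/
def IsSemiDirectedCycle (G : MixedGraph V) (k : ℕ) (v : ℕ → V) : Prop :=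
  3 ≤ k ∧ v k = v 0 ∧ (∀ i, i < k → G.step (v i) (v (i + 1))) ∧
    (∃ i, i < k ∧ G.arrow (v i) (v (i + 1))) ∧
    (∀ i j, i < j → j < k → v i ≠ v j)

/-- A chain graph is a mixed graph with no semi-directed cycle. -/
def IsChainGraph (G : MixedGraph V) : Prop := ∀ k v, ¬ G.IsSemiDirectedCycle k v

/-- A triplex `({a,c}, b)`: `a, c` nonadjacent and the induced subgraph on `{a,b,c}`
is `a→b←c`, `a→b−c`, or `a−b←c`. -/
def triplex (G : MixedGraph V) (a b c : V) : Prop :=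
  a ≠ c ∧ ¬ G.adj a c ∧
    ((G.arrow a b ∧ G.arrow c b) ∨ (G.arrow a b ∧ G.line b c) ∨ (G.line a b ∧ G.arrow c b))

def sameSkeleton (G H : MixedGraph V) : Prop := ∀ a b, G.adj a b ↔ H.adj a b

def sameTriplexes (G H : MixedGraph V) : Prop := ∀ a b c, G.triplex a b c ↔ H.triplex a b c

end MixedGraph

/-- The AMP Markov equivalence class of a chain graph `G0`: all chain graphs with the
same skeleton and the same triplexes as `G0`. -/
def AMPClass {V : Type} (G0 : MixedGraph V) : Set (MixedGraph V) :=
  {G | G.IsChainGraph ∧ G.sameSkeleton G0 ∧ G.sameTriplexes G0}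

/-- `E` is the AMP essential graph of the class of `G0`: same skeleton; `a→b` is an arrow
of `E` iff it occurs in some member and its reversal in none; all other edges are lines. -/
def IsEssentialGraph {V : Type} (G0 E : MixedGraph V) : Prop :=
  E.sameSkeleton G0 ∧
    (∀ a b, E.arrow a b ↔
      (∃ G ∈ AMPClass G0, G.arrow a b) ∧ ∀ G ∈ AMPClass G0, ¬ G.arrow b a) ∧
    (∀ a b, E.line a b ↔ G0.adj a b ∧ ¬ E.arrow a b ∧ ¬ E.arrow b a)

/-- A line of the essential graph is strong if it occurs as a line in every member. -/
def StrongLine {V : Type} (G0 E : MixedGraph V) (a b : V) : Prop :=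
  E.line a b ∧ ∀ G ∈ AMPClass G0, G.line a b

/-- A line of the essential graph is weak if both orientations occur among members. -/
def WeakLine {V : Type} (G0 E : MixedGraph V) (a b : V) : Prop :=
  E.line a b ∧ (∃ G ∈ AMPClass G0, G.arrow a b) ∧ (∃ G ∈ AMPClass G0, G.arrow b a)

/-- An arrow of the essential graph is strong if it occurs as an arrow in every member. -/
def StrongArrow {V : Type} (G0 E : MixedGraph V) (a b : V) : Prop :=
  E.arrow a b ∧ ∀ G ∈ AMPClass G0, G.arrow a b

/-- Two vertices are strongly equivalent if joined by a path of strong lines. -/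
def StronglyEquiv {V : Type} (G0 E : MixedGraph V) (x y : V) : Prop :=
  Relation.ReflTransGen (StrongLine G0 E) x y

/-- Arrow between strong-equivalence classes of the reduced graph: the class of `x`
points to the class of `y` iff some representatives are joined by an arrow of `E`. -/
def RArrow {V : Type} (G0 E : MixedGraph V) (x y : V) : Prop :=
  ∃ a b, StronglyEquiv G0 E x a ∧ StronglyEquiv G0 E y b ∧ E.arrow a b

/-- Line between distinct strong-equivalence classes of the reduced graph: some
representatives are joined by a (necessarily weak) line of `E`. -/
def RLine {V : Type} (G0 E : MixedGraph V) (x y : V) : Prop :=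
  ¬ StronglyEquiv G0 E x y ∧
    ∃ a b, StronglyEquiv G0 E x a ∧ StronglyEquiv G0 E y b ∧ E.line a b

/-- Adjacency of strong-equivalence classes in the reduced graph. -/
def RAdj {V : Type} (G0 E : MixedGraph V) (x y : V) : Prop :=
  RArrow G0 E x y ∨ RArrow G0 E y x ∨ RLine G0 E x y

section Auxiliary

variable {V : Type}

/-- In a chain graph there is no semi-directed 3-cycle. -/
lemma three_cycle (G : MixedGraph V) (hG : G.IsChainGraph) (a b c : V)
    (hab : G.step a b) (hbc : G.step b c) (hca : G.step c a)
    (harr : G.arrow a b ∨ G.arrow b c ∨ G.arrow c a)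
    (hab' : a ≠ b) (hac' : a ≠ c) (hbc' : b ≠ c) : False := by
  apply hG 3 (fun i => if i = 0 then a else if i = 1 then b else if i = 2 then c else a)
  refine ⟨le_refl 3, rfl, ?_, ?_, ?_⟩
  · intro i hi
    interval_cases i <;> simpa
  · rcases harr with h | h | h
    · exact ⟨0, by norm_num, by simpa⟩
    · exact ⟨1, by norm_num, by simpa⟩
    · exact ⟨2, by norm_num, by simpa⟩
  · intro i j hij hj
    interval_cases j <;> interval_cases i <;> simp_all

lemma strongLine_symm {G0 E : MixedGraph V} {a b : V} (h : StrongLine G0 E a b) :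
    StrongLine G0 E b a :=
  ⟨E.line_symm _ _ h.1, fun G hG => G.line_symm _ _ (h.2 G hG)⟩

lemma stronglyEquiv_symm {G0 E : MixedGraph V} {a b : V} (h : StronglyEquiv G0 E a b) :
    StronglyEquiv G0 E b a :=
  by
    haveI : Std.Symm (StrongLine G0 E) := ⟨fun _ _ hr => strongLine_symm hr⟩
    exact (Relation.ReflTransGen.symmetric (r := StrongLine G0 E)).symm _ _ h

lemma stronglyEquiv_trans {G0 E : MixedGraph V} {a b c : V}
    (h : StronglyEquiv G0 E a b) (h' : StronglyEquiv G0 E b c) : StronglyEquiv G0 E a c :=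
  Relation.ReflTransGen.trans h h'

/-- Key propagation step: if `u − w` is a strong line and both orientations of the
edge `w, c` occur among members of the class, then `c` is adjacent to `u` and both
orientations of the edge `u, c` occur among members as well. -/
lemma key_step {G0 E : MixedGraph V} (hE : IsEssentialGraph G0 E) (u w c : V)
    (hsl : StrongLine G0 E u w)
    (h1 : ∃ G ∈ AMPClass G0, G.arrow w c)
    (h2 : ∃ G ∈ AMPClass G0, G.arrow c w) :
    (∃ G ∈ AMPClass G0, G.arrow u c) ∧ (∃ G ∈ AMPClass G0, G.arrow c u) := by
  obtain ⟨G1, hG1, hwc⟩ := h1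
  obtain ⟨G2, hG2, hcw⟩ := h2
  have hlu1 : G1.line u w := hsl.2 G1 hG1
  have hlu2 : G2.line u w := hsl.2 G2 hG2
  have hcu : c ≠ u := fun h => G1.not_arrow_line w u (h ▸ hwc) (G1.line_symm _ _ hlu1)
  have huw : u ≠ w := fun h => E.line_irrefl _ (h ▸ hsl.1)
  have hwcne : w ≠ c := fun h => G1.arrow_irrefl _ (h ▸ hwc)
  -- `c` is adjacent to `u` in the skeleton
  have hadj : G0.adj c u := by
    by_contra hn
    have htpx : G2.triplex c w u :=
      ⟨hcu, fun h => hn ((hG2.2.1 c u).1 h), Or.inr (Or.inl ⟨hcw, G2.line_symm _ _ hlu2⟩)⟩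
    have htpx1 : G1.triplex c w u := (hG1.2.2 c w u).2 ((hG2.2.2 c w u).1 htpx)
    rcases htpx1.2.2 with ⟨h, h'⟩ | ⟨h, h'⟩ | ⟨h, h'⟩
    · exact G1.not_arrow_line u w h' hlu1
    · exact G1.not_arrow_arrow w c hwc h
    · exact G1.not_arrow_line u w h' hlu1
  have hadj1 : G1.adj c u := (hG1.2.1 c u).2 hadj
  have hadj2 : G2.adj c u := (hG2.2.1 c u).2 hadj
  constructor
  · by_contra hn
    push_neg at hn
    rcases hadj1 with h | h | h
    · -- cycle w → c → u − w in G1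
      exact three_cycle G1 hG1.1 w c u (Or.inl hwc) (Or.inl h) (Or.inr hlu1)
        (Or.inl hwc) hwcne huw.symm hcu
    · exact hn G1 hG1 h
    · -- cycle w → c − u − w in G1
      exact three_cycle G1 hG1.1 w c u (Or.inl hwc) (Or.inr h) (Or.inr hlu1)
        (Or.inl hwc) hwcne huw.symm hcu
  · by_contra hn
    push_neg at hn
    rcases hadj2 with h | h | h
    · exact hn G2 hG2 h
    · -- cycle u → c → w − u in G2
      exact three_cycle G2 hG2.1 u c w (Or.inl h) (Or.inl hcw)
        (Or.inr (G2.line_symm _ _ hlu2)) (Or.inl h) hcu.symm huw hwcne.symm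
    · -- cycle c → w − u − c in G2
      exact three_cycle G2 hG2.1 c w u (Or.inl hcw) (Or.inr (G2.line_symm _ _ hlu2))
        (Or.inr (G2.line_symm _ _ h)) (Or.inl hcw) hwcne.symm hcu huw.symm

end Auxiliary

/-- Lemma 3.9(b): if `α→β−γ` occurs as a subgraph of the reduced graph of the essential
graph over strong-equivalence classes, then `α ⇒ γ`: the classes `α` and `γ` are joined
by an arrow `α→γ` or a line `α−γ` in the reduced graph. -/
theorem stmt12 {V : Type} (G0 E : MixedGraph V) (h0 : G0.IsChainGraph)
    (hE : IsEssentialGraph G0 E) (x y z : V)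
    (hxy : ¬ StronglyEquiv G0 E x y) (hyz : ¬ StronglyEquiv G0 E y z)
    (hxz : ¬ StronglyEquiv G0 E x z)
    (ha : RArrow G0 E x y) (hl : RLine G0 E y z) :
    RArrow G0 E x z ∨ RLine G0 E x z := by
  obtain ⟨a, b, hxa, hyb, hab⟩ := ha
  obtain ⟨-, b', c, hyb', hzc, hbc⟩ := hl
  have hEline := (hE.2.2 b' c).1 hbc
  -- the line `b' − c` is weak: both orientations occur among members
  have hQb' : (∃ G ∈ AMPClass G0, G.arrow b' c) ∧ (∃ G ∈ AMPClass G0, G.arrow c b') := by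
    by_cases h1 : ∃ G ∈ AMPClass G0, G.arrow b' c
    · by_cases h2 : ∃ G ∈ AMPClass G0, G.arrow c b'
      · exact ⟨h1, h2⟩
      · push_neg at h2
        exact absurd ((hE.2.1 b' c).2 ⟨h1, h2⟩) hEline.2.1
    · by_cases h2 : ∃ G ∈ AMPClass G0, G.arrow c b'
      · push_neg at h1
        exact absurd ((hE.2.1 c b').2 ⟨h2, h1⟩) hEline.2.2
      · push_neg at h1; push_neg at h2
        have hstrong : StrongLine G0 E b' c := by
          refine ⟨hbc, fun G hG => ?_⟩
          rcases (hG.2.1 b' c).2 hEline.1 with h | h | h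
          · exact absurd h (h1 G hG)
          · exact absurd h (h2 G hG)
          · exact h
        exact absurd (stronglyEquiv_trans
          (stronglyEquiv_trans hyb' (Relation.ReflTransGen.single hstrong))
          (stronglyEquiv_symm hzc)) hyz
  -- propagate the weakness along the strong path from `b` to `b'`
  have hbb' : Relation.ReflTransGen (StrongLine G0 E) b b' :=
    stronglyEquiv_trans (stronglyEquiv_symm hyb) hyb'
  have hQb : (∃ G ∈ AMPClass G0, G.arrow b c) ∧ (∃ G ∈ AMPClass G0, G.arrow c b) := by
    clear hyb hab
    induction hbb' using Relation.ReflTransGen.head_induction_on with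
    | refl => exact hQb'
    | head hstep _ ih => exact key_step hE _ _ _ hstep ih.1 ih.2
  obtain ⟨⟨G1, hG1, hbc1⟩, ⟨G2, hG2, hcb2⟩⟩ := hQb
  have hrev : ∀ G ∈ AMPClass G0, ¬ G.arrow b a := ((hE.2.1 a b).1 hab).2
  have hane : a ≠ c := by
    intro h
    exact hxz (stronglyEquiv_trans (h ▸ hxa) (stronglyEquiv_symm hzc))
  have habne : a ≠ b := fun h => E.arrow_irrefl _ (h ▸ hab)
  have hbcne : b ≠ c := fun h => G1.arrow_irrefl _ (h ▸ hbc1)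
  by_cases hadj : E.adj a c
  · rcases hadj with h | h | h
    · exact Or.inl ⟨a, c, hxa, hzc, h⟩
    · -- `E.arrow c a` is impossible: it yields a semi-directed 3-cycle in `G1`
      exfalso
      have hnac : ∀ G ∈ AMPClass G0, ¬ G.arrow a c := ((hE.2.1 c a).1 h).2
      have hstep_ab : G1.step a b := by
        rcases (hG1.2.1 a b).2 ((hE.1 a b).1 (Or.inl hab)) with h' | h' | h'
        · exact Or.inl h'
        · exact absurd h' (hrev G1 hG1)
        · exact Or.inr h'
      have hstep_ca : G1.step c a := by
        rcases (hG1.2.1 a c).2 ((hE.1 a c).1 (Or.inr (Or.inl h))) with h' | h' | h'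
        · exact absurd h' (hnac G1 hG1)
        · exact Or.inl h'
        · exact Or.inr (G1.line_symm _ _ h')
      exact three_cycle G1 hG1.1 a b c hstep_ab (Or.inl hbc1) hstep_ca
        (Or.inr (Or.inl hbc1)) habne hane hbcne
    · exact Or.inr ⟨hxz, a, c, hxa, hzc, h⟩
  · -- `a` and `c` nonadjacent: contradiction with triplex preservation
    exfalso
    have hnadj : ∀ G ∈ AMPClass G0, ¬ G.adj a c :=
      fun G hG h => hadj ((hE.1 a c).2 ((hG.2.1 a c).1 h))
    rcases (hG2.2.1 a b).2 ((hE.1 a b).1 (Or.inl hab)) with h' | h' | h'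
    · -- `a → b ← c` in `G2`
      have ht : G2.triplex a b c := ⟨hane, hnadj G2 hG2, Or.inl ⟨h', hcb2⟩⟩
      have ht1 : G1.triplex a b c := (hG1.2.2 _ _ _).2 ((hG2.2.2 _ _ _).1 ht)
      rcases ht1.2.2 with ⟨_, h2⟩ | ⟨_, h2⟩ | ⟨_, h2⟩
      · exact G1.not_arrow_arrow b c hbc1 h2
      · exact G1.not_arrow_line b c hbc1 h2
      · exact G1.not_arrow_arrow b c hbc1 h2
    · exact hrev G2 hG2 h'
    · -- `c → b − a` in `G2`
      have hnadj' : ¬ G2.adj c a := by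
        intro h
        apply hnadj G2 hG2
        rcases h with h | h | h
        · exact Or.inr (Or.inl h)
        · exact Or.inl h
        · exact Or.inr (Or.inr (G2.line_symm _ _ h))
      have ht : G2.triplex c b a :=
        ⟨hane.symm, hnadj', Or.inr (Or.inl ⟨hcb2, G2.line_symm _ _ h'⟩)⟩
      have ht1 : G1.triplex c b a := (hG1.2.2 _ _ _).2 ((hG2.2.2 _ _ _).1 ht)
      rcases ht1.2.2 with ⟨h1, _⟩ | ⟨h1, _⟩ | ⟨h1, _⟩
      · exact G1.not_arrow_arrow b c hbc1 h1
      · exact G1.not_arrow_arrow b c hbc1 h1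
      · exact G1.not_arrow_line b c hbc1 (G1.line_symm _ _ h1)
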